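/- Let Z be a measurable space, let P and Q be probability measures on Z, let M = (1/2)·P + (1/2)·Q be their midpoint mixture, and let ℓ : Z → ℝ be a measurable function taking values in an interval [a, a + G] with G ≥ 0. Then for every λ₀ > 0, E_{Q}[ℓ] ≤ E_{P}[ℓ] + (1/λ₀)·(KL(P‖M) + KL(Q‖M)) + (λ₀/4)·G². -/

import Mathlib

open MeasureTheory
open scoped ENNReal

/-- Kullback–Leibler divergence of `Q` with respect to `P`,
`KL(Q‖P) = ∫ log (dQ/dP) dQ` (meaningful when `Q ≪ P`). -/
noncomputable def klDiv {Z : Type*} [MeasurableSpace Z] (Q P : Measure Z) : ℝ :=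
  ∫ z, Real.log (Q.rnDeriv P z).toReal ∂Q

section Aux
open Real

/-- `(1-u) e^{2u} ≤ 1+u` for `u ≥ 0`. -/
lemma aux_exp_ineq : ∀ u : ℝ, 0 ≤ u → (1 - u) * Real.exp (2*u) ≤ 1 + u := by
  have key : ∀ v : ℝ, HasDerivAt (fun u : ℝ => 1 + u - (1 - u) * Real.exp (2*u))
      (1 - (1 - 2*v) * Real.exp (2*v)) v := by
    intro v
    have h1 : HasDerivAt (fun u : ℝ => 1 + u) 1 v := by
      simpa using (hasDerivAt_id v).const_add 1
    have h2 : HasDerivAt (fun u : ℝ => (1 - u) * Real.exp (2*u))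
        ((-1) * Real.exp (2*v) + (1 - v) * (Real.exp (2*v) * 2)) v := by
      have ha : HasDerivAt (fun u : ℝ => 1 - u) (-1) v := by
        exact (hasDerivAt_id' v).const_sub 1
      have hb : HasDerivAt (fun u : ℝ => Real.exp (2*u)) (Real.exp (2*v) * 2) v := by
        have := (hasDerivAt_id v).const_mul (2:ℝ)
        exact ((Real.hasDerivAt_exp (2*v)).comp v this).congr_deriv (by ring)
      exact ha.mul hb
    have := h1.sub h2
    exact this.congr_deriv (by ring)
  have mono : MonotoneOn (fun u : ℝ => 1 + u - (1 - u) * Real.exp (2*u)) (Set.Ici 0) := by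
    apply monotoneOn_of_deriv_nonneg (convex_Ici 0)
    · exact (Continuous.continuousOn (by continuity))
    · intro v hv
      exact (key v).differentiableAt.differentiableWithinAt
    · intro v hv
      rw [(key v).deriv]
      have h1 : (1 - 2*v) * Real.exp (2*v) ≤ Real.exp (-(2*v)) * Real.exp (2*v) := by
        apply mul_le_mul_of_nonneg_right _ (Real.exp_nonneg _)
        linarith [Real.add_one_le_exp (-(2*v))]
      rw [← Real.exp_add] at h1
      simp at h1
      linarith
  intro u hu
  have h0 : (fun u : ℝ => 1 + u - (1 - u) * Real.exp (2*u)) 0 = 0 := by simp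
  have := mono (Set.self_mem_Ici) (by exact hu) hu
  simp only [h0] at this
  linarith [this]

lemma aux_log_diff : ∀ u : ℝ, 0 ≤ u → u < 1 →
    2*u ≤ Real.log (1+u) - Real.log (1-u) := by
  intro u hu hu1
  have h1 : (0:ℝ) < 1 - u := by linarith
  have h2 : (0:ℝ) < 1 + u := by linarith
  have h3 : Real.exp (2*u) ≤ (1+u)/(1-u) := by
    rw [le_div_iff₀ h1]
    have := aux_exp_ineq u hu
    linarith [this]
  have h4 : 2*u ≤ Real.log ((1+u)/(1-u)) :=
    (Real.le_log_iff_exp_le (by positivity)).mpr h3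
  rwa [Real.log_div h2.ne' h1.ne'] at h4

lemma aux_entropy_ineq : ∀ u : ℝ, 0 ≤ u → u ≤ 1 →
    u^2 ≤ (1+u) * Real.log (1+u) + (1-u) * Real.log (1-u) := by
  intro u hu hu1
  rcases eq_or_lt_of_le hu1 with rfl | hu1
  · norm_num
    nlinarith [Real.log_two_gt_d9]
  · -- u < 1
    set F : ℝ → ℝ := fun v => (1+v) * Real.log (1+v) + (1-v) * Real.log (1-v) - v^2 with hF
    have key : ∀ v ∈ Set.Ioo (0:ℝ) u, HasDerivAt F
        (Real.log (1+v) - Real.log (1-v) - 2*v) v := by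
      intro v hv
      have h1 : (0:ℝ) < 1 + v := by linarith [hv.1]
      have h2 : (0:ℝ) < 1 - v := by linarith [hv.2]
      have ha : HasDerivAt (fun w : ℝ => 1 + w) 1 v := by
        simpa using (hasDerivAt_id v).const_add 1
      have hb : HasDerivAt (fun w : ℝ => 1 - w) (-1) v := by
        exact (hasDerivAt_id' v).const_sub 1
      have hla : HasDerivAt (fun w : ℝ => Real.log (1+w)) (1/(1+v)) v := by
        exact ((Real.hasDerivAt_log h1.ne').comp v ha).congr_deriv (by simp)
      have hlb : HasDerivAt (fun w : ℝ => Real.log (1-w)) (-(1/(1-v))) v := by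
        have := (Real.hasDerivAt_log h2.ne').comp v hb
        exact this.congr_deriv (by simp)
      have hsq : HasDerivAt (fun w : ℝ => w^2) (2*v) v := by
        simpa using hasDerivAt_pow 2 v
      have := ((ha.mul hla).add (hb.mul hlb)).sub hsq
      exact this.congr_deriv (by field_simp; ring)
    have cont : ContinuousOn F (Set.Icc 0 u) := by
      apply ContinuousOn.sub
      apply ContinuousOn.add
      · apply ContinuousOn.mul (by fun_prop)
        apply ContinuousOn.log (by fun_prop)
        intro v hv; simp at hv; nlinarith [hv.1]
      · apply ContinuousOn.mul (by fun_prop)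
        apply ContinuousOn.log (by fun_prop)
        intro v hv; simp at hv; nlinarith [hv.2]
      · fun_prop
    have mono : MonotoneOn F (Set.Icc 0 u) := by
      apply monotoneOn_of_deriv_nonneg (convex_Icc 0 u) cont
      · intro v hv
        rw [interior_Icc] at hv
        exact (key v hv).differentiableAt.differentiableWithinAt
      · intro v hv
        rw [interior_Icc] at hv
        rw [(key v hv).deriv]
        have := aux_log_diff v (le_of_lt hv.1) (lt_trans hv.2 hu1)
        linarith
    have h0 : F 0 = 0 := by simp [hF]
    have := mono (Set.left_mem_Icc.mpr hu) (Set.right_mem_Icc.mpr hu) hu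
    rw [h0] at this
    simp only [hF] at this
    linarith

lemma aux_pointwise : ∀ x : ℝ, 0 ≤ x → x ≤ 2 →
    (x-1)^2 ≤ x * Real.log x + (2-x) * Real.log (2-x) := by
  intro x hx hx2
  rcases le_total 1 x with h | h
  · have := aux_entropy_ineq (x-1) (by linarith) (by linarith)
    have e1 : 1 + (x-1) = x := by ring
    have e2 : 1 - (x-1) = 2 - x := by ring
    rw [e1, e2] at this
    nlinarith [this]
  · have := aux_entropy_ineq (1-x) (by linarith) (by linarith)
    have e1 : 1 + (1-x) = 2 - x := by ring
    have e2 : 1 - (1-x) = x := by ring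
    rw [e1, e2] at this
    nlinarith [this]

lemma aux_xlogx_bound : ∀ x : ℝ, 0 ≤ x → x ≤ 2 → |x * Real.log x| ≤ 2 := by
  intro x hx hx2
  rcases eq_or_lt_of_le hx with rfl | hx
  · simp
  · rw [abs_le]
    constructor
    · have h1 := Real.one_sub_inv_le_log_of_pos hx
      have h2 : x * (1 - x⁻¹) ≤ x * Real.log x := by
        exact mul_le_mul_of_nonneg_left h1 (le_of_lt hx)
      have h3 : x * (1 - x⁻¹) = x - 1 := by field_simp
      nlinarith
    · have h1 := Real.log_le_sub_one_of_pos hx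
      nlinarith


end Aux

set_option maxHeartbeats 1000000 in
/-- Eq. (13): for probability measures `P, Q`, midpoint mixture `M = (1/2) P + (1/2) Q`,
and a measurable loss `ℓ` with values in `[a, a + G]`, for every `λ₀ > 0`,
`E_Q[ℓ] ≤ E_P[ℓ] + (1/λ₀) (KL(P‖M) + KL(Q‖M)) + (λ₀/4) G²`. -/
theorem expectation_change_via_mixture
    {Z : Type*} [MeasurableSpace Z] (P Q : Measure Z)
    [IsProbabilityMeasure P] [IsProbabilityMeasure Q]
    (M : Measure Z) (hM : M = (2 : ℝ≥0∞)⁻¹ • P + (2 : ℝ≥0∞)⁻¹ • Q)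
    (ℓ : Z → ℝ) (hℓ : Measurable ℓ) (a G : ℝ) (hG : 0 ≤ G)
    (hrange : ∀ z, ℓ z ∈ Set.Icc a (a + G))
    (l₀ : ℝ) (hl₀ : 0 < l₀) :
    ∫ z, ℓ z ∂Q ≤
      (∫ z, ℓ z ∂P) + (1 / l₀) * (klDiv P M + klDiv Q M) + (l₀ / 4) * G ^ 2 := by
  have hM2 : (2:ℝ≥0∞) • M = P + Q := by
    rw [hM, smul_add, smul_smul, smul_smul,
      ENNReal.mul_inv_cancel two_ne_zero ENNReal.ofNat_ne_top, one_smul, one_smul]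
  have hMprob : IsProbabilityMeasure M := by
    constructor
    rw [hM]
    simp only [Measure.coe_add, Measure.coe_smul, Pi.add_apply, Pi.smul_apply,
      measure_univ, smul_eq_mul, mul_one]
    exact ENNReal.inv_two_add_inv_two
  have hPM : P ≪ M := by
    refine Measure.AbsolutelyContinuous.mk fun s hs h0 => ?_
    have h2 : P s + Q s = 2 * M s := by
      rw [← Measure.add_apply, ← hM2, Measure.smul_apply, smul_eq_mul]
    rw [h0, mul_zero] at h2
    exact (add_eq_zero.mp h2).1
  have hQM : Q ≪ M := by
    refine Measure.AbsolutelyContinuous.mk fun s hs h0 => ?_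
    have h2 : P s + Q s = 2 * M s := by
      rw [← Measure.add_apply, ← hM2, Measure.smul_apply, smul_eq_mul]
    rw [h0, mul_zero] at h2
    exact (add_eq_zero.mp h2).2
  have hsum : (fun z => P.rnDeriv M z + Q.rnDeriv M z) =ᵐ[M] fun _ => (2:ℝ≥0∞) := by
    have h1 := (Measure.rnDeriv_add P Q M).symm
    have h2 : (P + Q).rnDeriv M = ((2:ℝ≥0∞) • M).rnDeriv M := by rw [hM2]
    have h3 := Measure.rnDeriv_smul_left_of_ne_top M M (r := 2) ENNReal.ofNat_ne_top
    have h4 := Measure.rnDeriv_self M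
    filter_upwards [h1, h3, h4] with z hz1 hz3 hz4
    rw [← Pi.add_apply, hz1, h2, hz3]
    simp [hz4]
  set gr : Z → ℝ := fun z => (Q.rnDeriv M z).toReal with hgr
  set hr : Z → ℝ := fun z => (P.rnDeriv M z).toReal with hhr
  have mgr : Measurable gr := (Measure.measurable_rnDeriv Q M).ennreal_toReal
  have mhr : Measurable hr := (Measure.measurable_rnDeriv P M).ennreal_toReal
  -- a.e. facts about gr, hr
  have hae : ∀ᵐ z ∂M, 0 ≤ gr z ∧ gr z ≤ 2 ∧ hr z = 2 - gr z := by
    filter_upwards [hsum] with z hz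
    have hQle : Q.rnDeriv M z ≤ 2 := by
      rw [← hz]; exact le_add_self
    have hPle : P.rnDeriv M z ≤ 2 := by
      rw [← hz]; exact le_add_self.trans_eq (add_comm _ _)
    have hQne : Q.rnDeriv M z ≠ ∞ := (hQle.trans_lt ENNReal.ofNat_lt_top).ne
    have hPne : P.rnDeriv M z ≠ ∞ := (hPle.trans_lt ENNReal.ofNat_lt_top).ne
    have htr : hr z + gr z = 2 := by
      rw [hhr, hgr]
      simp only
      rw [← ENNReal.toReal_add hPne hQne, hz]
      simp
    refine ⟨ENNReal.toReal_nonneg, ?_, by linarith [ENNReal.toReal_nonneg (a := P.rnDeriv M z)]⟩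
    linarith [ENNReal.toReal_nonneg (a := P.rnDeriv M z)]
  -- integrability helper
  have intb : ∀ (f : Z → ℝ), AEStronglyMeasurable f M → ∀ C : ℝ,
      (∀ᵐ z ∂M, |f z| ≤ C) → Integrable f M := fun f hf C h =>
    Integrable.mono' (integrable_const C) hf (by simpa [Real.norm_eq_abs] using h)
  -- bounds on ℓ
  set m : ℝ := a + G/2 with hm
  have hℓm : ∀ z, |ℓ z - m| ≤ G/2 := by
    intro z
    obtain ⟨h1, h2⟩ := hrange z
    rw [abs_le]; constructor <;> [skip; skip] <;> simp [hm] <;> linarith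
  have hℓb : ∀ z, |ℓ z| ≤ |a| + G := by
    intro z
    obtain ⟨h1, h2⟩ := hrange z
    rw [abs_le]
    cases abs_cases a with
    | inl h => constructor <;> linarith [h.1]
    | inr h => constructor <;> linarith [h.1]
  -- change of measure
  have hQint : ∫ z, ℓ z ∂Q = ∫ z, gr z * ℓ z ∂M := by
    rw [← integral_rnDeriv_smul hQM (f := ℓ)]; rfl
  have hPint : ∫ z, ℓ z ∂P = ∫ z, hr z * ℓ z ∂M := by
    rw [← integral_rnDeriv_smul hPM (f := ℓ)]; rfl
  have hklQ : klDiv Q M = ∫ z, gr z * Real.log (gr z) ∂M := by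
    rw [klDiv, ← integral_rnDeriv_smul hQM (f := fun z => Real.log (gr z))]; rfl
  have hklP : klDiv P M = ∫ z, hr z * Real.log (hr z) ∂M := by
    rw [klDiv, ← integral_rnDeriv_smul hPM (f := fun z => Real.log (hr z))]; rfl
  have hg1 : ∫ z, gr z ∂M = 1 := by
    have := Measure.integral_toReal_rnDeriv hQM
    simpa [measure_univ] using this
  have hh1 : ∫ z, hr z ∂M = 1 := by
    have := Measure.integral_toReal_rnDeriv hPM
    simpa [measure_univ] using this
  -- integrable functions
  have haeb : ∀ᵐ z ∂M, 0 ≤ gr z ∧ gr z ≤ 2 ∧ hr z = 2 - gr z := hae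
  have int_gl : Integrable (fun z => gr z * ℓ z) M := by
    refine intb _ (mgr.mul hℓ).aestronglyMeasurable (2 * (|a| + G)) ?_
    filter_upwards [hae] with z ⟨h0, h2, _⟩
    rw [abs_mul]
    have := hℓb z
    have : |gr z| ≤ 2 := by rw [abs_of_nonneg h0]; exact h2
    nlinarith [abs_nonneg (gr z), abs_nonneg (ℓ z), hℓb z]
  have int_hl : Integrable (fun z => hr z * ℓ z) M := by
    refine intb _ (mhr.mul hℓ).aestronglyMeasurable (2 * (|a| + G)) ?_
    filter_upwards [hae] with z ⟨h0, h2, hh⟩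
    rw [abs_mul]
    have : |hr z| ≤ 2 := by rw [hh, abs_of_nonneg (by linarith), ] ; linarith
    nlinarith [abs_nonneg (hr z), abs_nonneg (ℓ z), hℓb z]
  have int_g : Integrable gr M := by
    refine intb _ mgr.aestronglyMeasurable 2 ?_
    filter_upwards [hae] with z ⟨h0, h2, _⟩
    rw [abs_of_nonneg h0]; exact h2
  have int_h : Integrable hr M := by
    refine intb _ mhr.aestronglyMeasurable 2 ?_
    filter_upwards [hae] with z ⟨h0, h2, hh⟩
    rw [hh, abs_of_nonneg (by linarith)]; linarith
  have int_abs : Integrable (fun z => |gr z - 1|) M := by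
    refine intb _ (mgr.sub measurable_const).abs.aestronglyMeasurable 1 ?_
    filter_upwards [hae] with z ⟨h0, h2, _⟩
    rw [abs_abs]; rw [abs_le]; constructor <;> linarith
  have int_sq : Integrable (fun z => (gr z - 1)^2) M := by
    refine intb _ (((mgr.sub measurable_const).pow_const 2)).aestronglyMeasurable 1 ?_
    filter_upwards [hae] with z ⟨h0, h2, _⟩
    rw [abs_of_nonneg (sq_nonneg _)]
    nlinarith
  have int_glg : Integrable (fun z => gr z * Real.log (gr z)) M := by
    refine intb _ (mgr.mul (Real.measurable_log.comp mgr)).aestronglyMeasurable 2 ?_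
    filter_upwards [hae] with z ⟨h0, h2, _⟩
    exact aux_xlogx_bound _ h0 h2
  have int_hlh : Integrable (fun z => hr z * Real.log (hr z)) M := by
    refine intb _ (mhr.mul (Real.measurable_log.comp mhr)).aestronglyMeasurable 2 ?_
    filter_upwards [hae] with z ⟨h0, h2, hh⟩
    exact aux_xlogx_bound _ (by rw [hh]; linarith) (by rw [hh]; linarith)
  -- step 1 : E_Q - E_P = ∫ (gr - hr)(ℓ - m)
  obtain ⟨t, ht⟩ : ∃ t : ℝ, t = ∫ z, |gr z - 1| ∂M := ⟨_, rfl⟩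
  obtain ⟨s, hs⟩ : ∃ s : ℝ, s = ∫ z, (gr z - 1)^2 ∂M := ⟨_, rfl⟩
  have ht0 : 0 ≤ t := ht ▸ integral_nonneg fun z => abs_nonneg _
  have int_mg : Integrable (fun z => m * gr z) M := int_g.const_mul m
  have int_mh : Integrable (fun z => m * hr z) M := int_h.const_mul m
  have int_gl_hl : Integrable (fun z => gr z * ℓ z - hr z * ℓ z) M := int_gl.sub int_hl
  have int_mg_mh : Integrable (fun z => m * gr z - m * hr z) M := int_mg.sub int_mh
  have iA : ∫ z, (gr z * ℓ z - hr z * ℓ z) ∂M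
      = (∫ z, gr z * ℓ z ∂M) - ∫ z, hr z * ℓ z ∂M := integral_sub int_gl int_hl
  have iB : ∫ z, (m * gr z - m * hr z) ∂M = 0 := by
    rw [integral_sub int_mg int_mh, integral_const_mul, integral_const_mul, hg1, hh1]
    ring
  have step1 : ∫ z, ℓ z ∂Q - ∫ z, ℓ z ∂P
      = ∫ z, (gr z - hr z) * (ℓ z - m) ∂M := by
    have e : (fun z => (gr z - hr z) * (ℓ z - m))
        = fun z => (gr z * ℓ z - hr z * ℓ z) - (m * gr z - m * hr z) := by
      funext z; ring
    rw [e, integral_sub int_gl_hl int_mg_mh, iA, iB, hQint, hPint]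
    ring
  -- step 2 : pointwise bound
  have int_lhs : Integrable (fun z => (gr z - hr z) * (ℓ z - m)) M := by
    refine intb _ (((mgr.sub mhr).mul (hℓ.sub measurable_const))).aestronglyMeasurable G ?_
    filter_upwards [hae] with z ⟨h0, h2, hh⟩
    rw [abs_mul]
    have h4 : |gr z - hr z| ≤ 2 := by
      rw [hh, abs_le]; constructor <;> linarith
    calc |gr z - hr z| * |ℓ z - m| ≤ 2 * (G/2) :=
          mul_le_mul h4 (hℓm z) (abs_nonneg _) (by norm_num)
      _ = G := by ring
  have step2 : ∫ z, (gr z - hr z) * (ℓ z - m) ∂M ≤ G * t := by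
    rw [ht, ← integral_const_mul]
    apply integral_mono_ae int_lhs (int_abs.const_mul G)
    filter_upwards [hae] with z ⟨h0, h2, hh⟩
    have h1 : (gr z - hr z) * (ℓ z - m) = 2 * ((gr z - 1) * (ℓ z - m)) := by
      rw [hh]; ring
    have h3 : (gr z - 1) * (ℓ z - m) ≤ |gr z - 1| * (G/2) :=
      calc (gr z - 1) * (ℓ z - m) ≤ |(gr z - 1) * (ℓ z - m)| := le_abs_self _
        _ = |gr z - 1| * |ℓ z - m| := abs_mul _ _
        _ ≤ |gr z - 1| * (G/2) := mul_le_mul_of_nonneg_left (hℓm z) (abs_nonneg _)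
    calc (gr z - hr z) * (ℓ z - m) = 2 * ((gr z - 1) * (ℓ z - m)) := h1
      _ ≤ 2 * (|gr z - 1| * (G/2)) := by linarith
      _ = G * |gr z - 1| := by ring
  -- step 3 : t^2 ≤ s
  have step3 : t^2 ≤ s := by
    have h0 : 0 ≤ ∫ z, (|gr z - 1| - t)^2 ∂M := integral_nonneg fun z => sq_nonneg _
    have e : (fun z => (|gr z - 1| - t)^2)
        = fun z => ((gr z - 1)^2 - (2*t) * |gr z - 1|) + t^2 := by
      funext z
      nlinarith [sq_abs (gr z - 1)]
    have int_ta : Integrable (fun z => (2*t) * |gr z - 1|) M := int_abs.const_mul (2*t)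
    have int_sq_ta : Integrable (fun z => (gr z - 1)^2 - (2*t) * |gr z - 1|) M :=
      int_sq.sub int_ta
    rw [e, integral_add int_sq_ta (integrable_const _),
      integral_sub int_sq int_ta, integral_const_mul, integral_const,
      probReal_univ] at h0
    simp only [ENNReal.toReal_one, smul_eq_mul, one_mul, ← ht, ← hs] at h0
    nlinarith
  -- step 4 : s ≤ KL sum
  have step4 : s ≤ klDiv P M + klDiv Q M := by
    have int_sum : Integrable (fun z => hr z * Real.log (hr z) + gr z * Real.log (gr z)) M :=
      int_hlh.add int_glg
    rw [hklP, hklQ, ← integral_add int_hlh int_glg, hs]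
    apply integral_mono_ae int_sq int_sum
    filter_upwards [hae] with z ⟨h0, h2, hh⟩
    have := aux_pointwise (gr z) h0 h2
    rw [hh]
    linarith
  -- final arithmetic
  have hfin : G * t ≤ (1 / l₀) * (klDiv P M + klDiv Q M) + (l₀ / 4) * G ^ 2 := by
    have h1 : t^2 ≤ klDiv P M + klDiv Q M := step3.trans step4
    have h3 : l₀ * (G * t) ≤ t^2 + l₀^2 * G^2 / 4 := by
      nlinarith [sq_nonneg (t - l₀ * G / 2)]
    have h4 : (1 / l₀) * (klDiv P M + klDiv Q M) + (l₀ / 4) * G ^ 2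
        = ((klDiv P M + klDiv Q M) + l₀^2 * G^2 / 4) / l₀ := by
      field_simp
    rw [h4, le_div_iff₀ hl₀]
    nlinarith
  linarith [step1, step2, hfin]
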